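/- Let σ > 0 and m·(m−1) ≠ 0. If (u, v) ∈ ℝ² with k + u ≠ 0 and 1 + v ≠ 0 satisfies g(u,v) = 0 and h(u,v) = 0, then u satisfies the cubic equation u³ + b·u² + c·u + d = 0, where b = b_g·γ + b_s·σ + b₀, c = c_g·γ + c_s·σ + c_{sg}·σ·γ + c₀, d = d_s·σ + d₀, with b_g = −k/(m−1), b_s = (v₀ − v₀·m − m)/(m(m−1)), b₀ = (m²k + ε − 2mε)/(m(m−1)), c_g = εk/(m(m−1)), c_s = (v₀+1)(ε − mk)/(m(m−1)), c_{sg} = v₀k/(m(m−1)), c₀ = (−2mεk + ε²)/(m(m−1)), d_s = εk(v₀+1)/(m(m−1)), d₀ = ε²k/(m(m−1)). -/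

import Mathlib

/-- For σ > 0 and m(m−1) ≠ 0, the u-component of any homogeneous steady state of the
bacteria-nutrient kinetics satisfies the cubic u³ + b·u² + c·u + d = 0 with the
coefficients b = b_g·γ + b_s·σ + b₀, c = c_g·γ + c_s·σ + c_{sg}·σ·γ + c₀, d = d_s·σ + d₀. -/
theorem stmt_5 (γ k m ε σ v₀ u v : ℝ) (hσ : 0 < σ) (hm : m * (m - 1) ≠ 0)
    (hku : k + u ≠ 0) (hv1 : 1 + v ≠ 0)
    (hg : (γ + (1 - γ) * (u / (k + u))) * u * (v / (1 + v)) - m * u + ε = 0)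
    (hh : -((γ + (1 - γ) * (u / (k + u))) * u * (v / (1 + v))) + σ * (v₀ - v) = 0) :
    u ^ 3
      + ((-k / (m - 1)) * γ + ((v₀ - v₀ * m - m) / (m * (m - 1))) * σ
          + (m ^ 2 * k + ε - 2 * m * ε) / (m * (m - 1))) * u ^ 2
      + ((ε * k / (m * (m - 1))) * γ + ((v₀ + 1) * (ε - m * k) / (m * (m - 1))) * σ
          + (v₀ * k / (m * (m - 1))) * σ * γ
          + (-(2 * m * ε * k) + ε ^ 2) / (m * (m - 1))) * u
      + ((ε * k * (v₀ + 1) / (m * (m - 1))) * σ + ε ^ 2 * k / (m * (m - 1))) = 0 := by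
  have hm1 : m - 1 ≠ 0 := fun h => hm (by rw [h]; ring)
  have hm0 : m ≠ 0 := fun h => hm (by rw [h]; ring)
  have hv2 : σ * v = σ * v₀ - m * u + ε := by linear_combination (-1 : ℝ) * hg - hh
  have hA : (γ * (k + u) + (1 - γ) * u) * u * v - (m * u - ε) * (k + u) * (1 + v) = 0 := by
    have h := hg
    field_simp at h
    linear_combination h
  field_simp
  linear_combination (σ) * hA -
    (((γ * (k + u) + (1 - γ) * u) * u - (m * u - ε) * (k + u))) * hv2
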